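/- For complex a, b, s with 0 < Re(s) < Re(a) and b not a nonpositive integer, ∫₀^∞ t^{s−1} ₁F₁[a; b; −t] dt = Γ(s)Γ(b)Γ(a−s)/(Γ(a)Γ(b−s)). -/

import Mathlib

open Complex MeasureTheory

/-- Pochhammer symbol (rising factorial) on `ℂ`. -/
noncomputable def poch (a : ℂ) (n : ℕ) : ℂ := (ascPochhammer ℂ n).eval a

/-- Kummer confluent hypergeometric function `₁F₁[a; c; z]`. -/
noncomputable def F11 (a c z : ℂ) : ℂ :=
  ∑' n : ℕ, poch a n / poch c n * z ^ n / (Nat.factorial n : ℂ)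

open Set

noncomputable def kum (a b z : ℂ) (n : ℕ) : ℂ := poch a n / poch b n * z ^ n / (Nat.factorial n : ℂ)

lemma poch_zero (a : ℂ) : poch a 0 = 1 := by simp [poch]

lemma poch_succ_right (a : ℂ) (n : ℕ) : poch a (n + 1) = poch a n * (a + n) :=
  ascPochhammer_succ_eval n a

lemma poch_succ_left (a : ℂ) (n : ℕ) : poch a (n + 1) = a * poch (a + 1) n := by
  simp [poch, ascPochhammer_succ_left, Polynomial.eval_comp]

lemma poch_ne_zero {b : ℂ} (hb : ∀ n : ℕ, b ≠ -n) (n : ℕ) : poch b n ≠ 0 := by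
  induction n with
  | zero => simp [poch_zero]
  | succ n ih =>
    rw [poch_succ_right]
    refine mul_ne_zero ih fun h => hb n ?_
    linear_combination h



lemma kum_succ (a b z : ℂ) (n : ℕ) :
    kum a b z (n + 1) = kum a b z n * ((a + n) / (b + n) * z / (n + 1)) := by
  simp only [kum, poch_succ_right, pow_succ, Nat.factorial_succ, Nat.cast_mul, Nat.cast_add,
    Nat.cast_one]
  field_simp

lemma summable_kum (a b z : ℂ) : Summable (kum a b z) := by
  obtain ⟨N, hN⟩ := exists_nat_gt (max (2 * ‖b‖)
    (max (2 * ‖a‖) (16 * ‖z‖)))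
  have hN1 : 2 * ‖b‖ < N := lt_of_le_of_lt (le_max_left _ _) hN
  have hN2 : 2 * ‖a‖ < N := lt_of_le_of_lt (le_max_left _ _ |>.trans (le_max_right _ _)) hN
  have hN3 : 16 * ‖z‖ < N := lt_of_le_of_lt (le_max_right _ _ |>.trans (le_max_right _ _)) hN
  refine summable_of_ratio_norm_eventually_le (r := 1/2) (by norm_num) ?_
  filter_upwards [Filter.eventually_ge_atTop N] with n hn
  rw [kum_succ, norm_mul]
  have hn' : (N : ℝ) ≤ n := by exact_mod_cast hn
  have h0 : (0:ℝ) < N := lt_of_le_of_lt (by positivity) hN1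
  have h1 : (0:ℝ) < n := lt_of_lt_of_le h0 hn'
  have key : ‖(a + n) / (b + n) * z / ((n : ℂ) + 1)‖ ≤ 1/2 := by
    have hA : ‖a + n‖ ≤ 3/2 * n := by
      refine (norm_add_le _ _).trans ?_
      rw [Complex.norm_natCast]
      nlinarith
    have hB : (n : ℝ)/2 ≤ ‖b + n‖ := by
      have : (n : ℝ) ≤ ‖b + n‖ + ‖b‖ := by
        calc (n:ℝ) = ‖(b + n) - b‖ := by rw [add_sub_cancel_left, Complex.norm_natCast]
        _ ≤ _ := norm_sub_le _ _
      nlinarith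
    have hB0 : (0:ℝ) < ‖b + n‖ := lt_of_lt_of_le (by positivity) hB
    have hcast : ‖(n:ℂ) + 1‖ = (n : ℝ) + 1 := by
      rw [show ((n:ℂ) + 1) = (((n : ℝ) + 1 : ℝ) : ℂ) by push_cast; ring,
        Complex.norm_of_nonneg (by positivity)]
    simp only [norm_div, norm_mul, hcast]
    rw [div_le_iff₀ (by positivity), div_mul_eq_mul_div, div_mul_eq_mul_div,
      div_le_iff₀ hB0]
    have hz : ‖z‖ ≤ n / 16 := by nlinarith
    have := norm_nonneg z
    nlinarith [norm_nonneg (a + n)]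
  calc ‖kum a b z n‖ * ‖(a + n) / (b + n) * z / ((n : ℂ) + 1)‖
      ≤ ‖kum a b z n‖ * (1/2) := by
        exact mul_le_mul_of_nonneg_left key (norm_nonneg _)
    _ = 1/2 * ‖kum a b z n‖ := by ring

lemma shift_avoid {b : ℂ} (hb : ∀ n : ℕ, b ≠ -n) (m : ℕ) : ∀ n : ℕ, b + m ≠ -n := by
  intro n h
  refine hb (n + m) ?_
  push_cast
  linear_combination h

lemma kum_rec {a b : ℂ} (hb : ∀ n : ℕ, b ≠ -n) (z : ℂ) (n : ℕ) :
    kum a b z (n + 1) - kum a (b + 1) z (n + 1)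
      = a / (b * (b + 1)) * z * kum (a + 1) (b + 2) z n := by
  have hb0 : b ≠ 0 := by simpa using hb 0
  have hb1 : b + 1 ≠ 0 := by
    intro h; exact hb 1 (by push_cast; linear_combination h)
  have hbn : b + 1 + n ≠ 0 := by
    intro h; refine hb (n+1) ?_; push_cast; linear_combination h
  have hb1' : ∀ m : ℕ, b + 1 ≠ -m := fun m => by
    have := shift_avoid hb 1 m; simpa using this
  have hb2' : ∀ m : ℕ, b + 2 ≠ -m := fun m => by
    have := shift_avoid hb 2 m; simpa using this
  have hp : poch (b + 1) n ≠ 0 := poch_ne_zero hb1' n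
  have hq : poch (b + 2) n ≠ 0 := poch_ne_zero hb2' n
  have hfac : ((n.factorial : ℂ)) ≠ 0 := Nat.cast_ne_zero.mpr n.factorial_ne_zero
  have hn1 : ((n:ℂ) + 1) ≠ 0 := Nat.cast_add_one_ne_zero n
  have key : poch (b + 1) n * (b + 1 + n) = (b + 1) * poch (b + 2) n := by
    rw [← poch_succ_right, poch_succ_left, show b + 1 + 1 = b + 2 by ring]
  have scalar : (poch b (n+1))⁻¹ - (poch (b+1) (n+1))⁻¹
      = ((n:ℂ)+1) / (b * (b+1) * poch (b+2) n) := by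
    have hpval : poch (b+1) n = (b+1) * poch (b+2) n / (b+1+(n:ℂ)) :=
      (eq_div_iff hbn).mpr key
    rw [poch_succ_left b, poch_succ_left (b+1), show b + 1 + 1 = b + 2 by ring, hpval]
    field_simp
    ring
  have e1 : kum a b z (n+1) - kum a (b+1) z (n+1)
      = poch a (n+1) * z^(n+1) / ((n+1).factorial : ℂ)
        * ((poch b (n+1))⁻¹ - (poch (b+1) (n+1))⁻¹) := by
    simp only [kum]
    field_simp
  rw [e1, scalar, kum, poch_succ_left a, Nat.factorial_succ, Nat.cast_mul, pow_succ]
  have : ((n+1 : ℕ) : ℂ) = (n : ℂ) + 1 := by push_cast; ring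
  rw [this]
  field_simp

lemma F11_eq_tsum (a b z : ℂ) : F11 a b z = ∑' n, kum a b z n := rfl

lemma kum_zero (a b z : ℂ) : kum a b z 0 = 1 := by simp [kum, poch_zero]

lemma F11_rec {a b : ℂ} (hb : ∀ n : ℕ, b ≠ -n) (z : ℂ) :
    F11 a b z = F11 a (b + 1) z + a / (b * (b + 1)) * z * F11 (a + 1) (b + 2) z := by
  have S1 := summable_kum a b z
  have S2 := summable_kum a (b + 1) z
  have hdiff : F11 a b z - F11 a (b + 1) z
      = ∑' n, (kum a b z n - kum a (b + 1) z n) := (S1.tsum_sub S2).symm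
  have hsub : Summable (fun n => kum a b z n - kum a (b + 1) z n) := S1.sub S2
  have : F11 a b z - F11 a (b + 1) z = a / (b * (b + 1)) * z * F11 (a + 1) (b + 2) z := by
    rw [hdiff, hsub.tsum_eq_zero_add]
    simp only [kum_zero, sub_self, zero_add]
    calc (∑' n, (kum a b z (n + 1) - kum a (b + 1) z (n + 1)))
        = ∑' n, a / (b * (b + 1)) * z * kum (a + 1) (b + 2) z n :=
          tsum_congr fun n => kum_rec hb z n
      _ = a / (b * (b + 1)) * z * F11 (a + 1) (b + 2) z := by
          rw [F11_eq_tsum, tsum_mul_left]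
  linear_combination this

lemma Gamma_ne_zero_re_pos {z : ℂ} (h : 0 < z.re) : Complex.Gamma z ≠ 0 := by
  refine Complex.Gamma_ne_zero fun m hm => ?_
  rw [hm] at h
  simp only [neg_re, natCast_re] at h
  have : (0:ℝ) ≤ m := Nat.cast_nonneg m
  linarith

lemma beta_Ioo {c d : ℂ} (hc : 0 < c.re) (hd : 0 < d.re) :
    IntegrableOn (fun u : ℝ => (u:ℂ)^(c-1) * (1-(u:ℂ))^(d-1)) (Ioo (0:ℝ) 1) := by
  have h := Complex.betaIntegral_convergent hc hd
  rw [intervalIntegrable_iff_integrableOn_Ioc_of_le zero_le_one] at h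
  exact h.mono_set Ioo_subset_Ioc_self

lemma beta_Ioo_val {c d : ℂ} (hc : 0 < c.re) (hd : 0 < d.re) :
    ∫ u in Ioo (0:ℝ) 1, (u:ℂ)^(c-1) * (1-(u:ℂ))^(d-1)
      = Complex.Gamma c * Complex.Gamma d / Complex.Gamma (c+d) := by
  have hne : Complex.Gamma (c+d) ≠ 0 := Gamma_ne_zero_re_pos (by simp [add_re]; linarith)
  have h := Complex.Gamma_mul_Gamma_eq_betaIntegral hc hd
  have : Complex.betaIntegral c d
      = ∫ u in Ioo (0:ℝ) 1, (u:ℂ)^(c-1) * (1-(u:ℂ))^(d-1) := by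
    rw [Complex.betaIntegral, intervalIntegral.integral_of_le zero_le_one,
      MeasureTheory.integral_Ioc_eq_integral_Ioo]
  rw [this] at h
  rw [eq_div_iff hne, mul_comm _ (Complex.Gamma (c+d)), ← h]

lemma Gamma_poch {a : ℂ} (ha : 0 < a.re) (n : ℕ) :
    Complex.Gamma (a + n) = poch a n * Complex.Gamma a := by
  induction n with
  | zero => simp [poch_zero]
  | succ n ih =>
    have hne : a + n ≠ 0 := by
      intro h
      have : (a + n).re = 0 := by rw [h]; simp
      simp only [add_re, natCast_re] at this
      have : (0:ℝ) ≤ n := Nat.cast_nonneg n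
      linarith [this]
    calc Complex.Gamma (a + (n+1 : ℕ))
        = Complex.Gamma ((a + n) + 1) := by push_cast; ring_nf
      _ = (a + n) * Complex.Gamma (a + n) := Complex.Gamma_add_one _ hne
      _ = poch a (n+1) * Complex.Gamma a := by rw [ih, poch_succ_right]; ring

lemma euler_rep {a b : ℂ} (ha : 0 < a.re) (hab : a.re < b.re) {t : ℝ} (ht : 0 ≤ t) :
    ∫ u in Ioo (0:ℝ) 1, Complex.exp (-((t:ℂ) * u)) * ((u:ℂ)^(a-1) * (1-(u:ℂ))^(b-a-1))
      = Complex.Gamma a * Complex.Gamma (b-a) / Complex.Gamma b * F11 a b (-(t:ℂ)) := by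
  have hba : 0 < (b-a).re := by simp [sub_re]; linarith
  set P : ℝ → ℂ := fun u => (u:ℂ)^(a-1) * (1-(u:ℂ))^(b-a-1) with hP
  set F : ℕ → ℝ → ℂ := fun n u => (-((t:ℂ) * u))^n / (n.factorial : ℂ) * P u with hF
  have hPint : IntegrableOn P (Ioo (0:ℝ) 1) := beta_Ioo ha hba
  -- integrability of each term
  have hbnd : ∀ n : ℕ, ∀ᵐ u ∂(volume.restrict (Ioo (0:ℝ) 1)),
      ‖F n u‖ ≤ (t^n / n.factorial : ℝ) * ‖P u‖ := by
    intro n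
    filter_upwards [ae_restrict_mem measurableSet_Ioo] with u hu
    rw [hF]
    simp only [norm_mul, norm_div, norm_pow, norm_neg]
    have h1 : ‖(t:ℂ)‖ = t := by
      rw [Complex.norm_of_nonneg ht]
    have h1u : ‖(u:ℂ)‖ = u := by
      rw [Complex.norm_of_nonneg hu.1.le]
    have h2 : ‖((n.factorial : ℕ) : ℂ)‖ = (n.factorial : ℝ) := by
      rw [Complex.norm_natCast]
    rw [h1, h1u, h2]
    have htu : t * u ≤ t := by nlinarith [hu.2.le, hu.1.le]
    have hh : (t*u)^n ≤ t^n := pow_le_pow_left₀ (by nlinarith [hu.1.le]) htu n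
    rw [mul_pow] at hh
    have hfac : (0:ℝ) < n.factorial := by positivity
    rw [div_mul_eq_mul_div, div_mul_eq_mul_div]
    gcongr
    exact mul_nonneg ht hu.1.le
  have hFint : ∀ n, IntegrableOn (F n) (Ioo (0:ℝ) 1) := by
    intro n
    have hc : Continuous fun u : ℝ => (-((t:ℂ) * u))^n / (n.factorial : ℂ) :=
      (((continuous_const.mul Complex.continuous_ofReal).neg).pow n).div_const _
    refine Integrable.mono' (hPint.norm.const_mul (t^n / n.factorial : ℝ))
      (hc.aestronglyMeasurable.mul hPint.aestronglyMeasurable) (hbnd n)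
  -- bound on integral of norms
  have hFnorm : ∀ n, ∫ u in Ioo (0:ℝ) 1, ‖F n u‖
      ≤ (t^n / n.factorial : ℝ) * ∫ u in Ioo (0:ℝ) 1, ‖P u‖ := by
    intro n
    rw [← integral_const_mul]
    refine MeasureTheory.integral_mono_of_nonneg ?_ (hPint.norm.const_mul _) (hbnd n)
    exact Filter.Eventually.of_forall fun u => norm_nonneg _
  have hsum : Summable fun n => ∫ u in Ioo (0:ℝ) 1, ‖F n u‖ := by
    refine Summable.of_nonneg_of_le (fun n => ?_) (fun n => hFnorm n)
      (((Real.summable_pow_div_factorial t)).mul_right _)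
    exact MeasureTheory.integral_nonneg fun u => norm_nonneg _
  have hHasSum := MeasureTheory.hasSum_integral_of_summable_integral_norm hFint hsum
  -- identify the pointwise sum
  have hptw : ∀ u : ℝ, (∑' n, F n u) = Complex.exp (-((t:ℂ) * u)) * P u := by
    intro u
    rw [hF]
    simp only
    rw [tsum_mul_right]
    congr 1
    rw [Complex.exp_eq_exp_ℂ, NormedSpace.exp_eq_tsum_div]
  -- value of each term integral
  have hterm : ∀ n : ℕ, ∫ u in Ioo (0:ℝ) 1, F n u
      = (-(t:ℂ))^n / (n.factorial : ℂ) *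
        (Complex.Gamma (a+n) * Complex.Gamma (b-a) / Complex.Gamma (b+n)) := by
    intro n
    have han : 0 < (a + n).re := by
      simp only [add_re, natCast_re]
      have : (0:ℝ) ≤ n := Nat.cast_nonneg n
      linarith
    have step : ∀ u ∈ Ioo (0:ℝ) 1, F n u
        = (-(t:ℂ))^n / (n.factorial : ℂ) * ((u:ℂ)^((a+n)-1) * (1-(u:ℂ))^((b-a)-1)) := by
      intro u hu
      have hu0 : (u:ℂ) ≠ 0 := ofReal_ne_zero.mpr hu.1.ne'
      rw [hF]
      simp only
      rw [hP]
      simp only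
      have e1 : (-((t:ℂ) * u))^n = (-(t:ℂ))^n * (u:ℂ)^(n:ℕ) := by
        rw [show -((t:ℂ) * u) = (-(t:ℂ)) * u by ring, mul_pow]
      have e2 : (u:ℂ)^((a+n)-1) = (u:ℂ)^(a-1) * (u:ℂ)^(n:ℕ) := by
        rw [← Complex.cpow_natCast, ← Complex.cpow_add _ _ hu0]
        congr 1
        ring
      rw [e1, e2]
      ring
    rw [setIntegral_congr_fun measurableSet_Ioo step, integral_const_mul,
      beta_Ioo_val han hba, show (a+(n:ℂ))+(b-a) = b+n by ring]
  have htsum : ∑' n, ∫ u in Ioo (0:ℝ) 1, F n u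
      = Complex.Gamma a * Complex.Gamma (b-a) / Complex.Gamma b * F11 a b (-(t:ℂ)) := by
    rw [tsum_congr hterm]
    have : ∀ n : ℕ, (-(t:ℂ))^n / (n.factorial : ℂ) *
        (Complex.Gamma (a+n) * Complex.Gamma (b-a) / Complex.Gamma (b+n))
        = Complex.Gamma a * Complex.Gamma (b-a) / Complex.Gamma b * kum a b (-(t:ℂ)) n := by
      intro n
      rw [Gamma_poch ha n, Gamma_poch (lt_trans ha hab : 0 < b.re) n, kum]
      ring
    rw [tsum_congr this, tsum_mul_left, F11_eq_tsum]
  have heq := hHasSum.tsum_eq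
  rw [htsum] at heq
  rw [heq]
  exact setIntegral_congr_fun measurableSet_Ioo fun u _ => (hptw u).symm

lemma mellin_base {a b s : ℂ} (hs : 0 < s.re) (hsa : s.re < a.re) (hab : a.re < b.re) :
    IntegrableOn (fun t : ℝ => (t:ℂ)^(s-1) * F11 a b (-(t:ℂ))) (Ioi (0:ℝ)) ∧
    ∫ t in Ioi (0:ℝ), (t:ℂ)^(s-1) * F11 a b (-(t:ℂ))
      = Complex.Gamma s * Complex.Gamma b * Complex.Gamma (a-s) /
          (Complex.Gamma a * Complex.Gamma (b-s)) := by
  have ha : 0 < a.re := hs.trans hsa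
  have hb : 0 < b.re := ha.trans hab
  have hba : 0 < (b-a).re := by simp [sub_re]; linarith
  have has : 0 < (a-s).re := by simp [sub_re]; linarith
  have hbs : 0 < (b-s).re := by simp [sub_re]; linarith
  set μ := volume.restrict (Ioi (0:ℝ)) with hμ
  set ν := volume.restrict (Ioo (0:ℝ) 1) with hν
  set K : ℝ → ℝ → ℂ := fun t u =>
    (t:ℂ)^(s-1) * (Complex.exp (-((t:ℂ) * u)) * ((u:ℂ)^(a-1) * (1-(u:ℂ))^(b-a-1))) with hK
  -- norm identity
  have hnormK : ∀ t ∈ Ioi (0:ℝ), ∀ u ∈ Ioo (0:ℝ) 1,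
      ‖K t u‖ = t^(s.re-1) * Real.exp (-(t*u)) *
        ‖(u:ℂ)^(a-1) * (1-(u:ℂ))^(b-a-1)‖ := by
    intro t ht u hu
    rw [hK]
    simp only [norm_mul]
    have c1 : ‖(t:ℂ)^(s-1)‖ = t^(s.re-1) := by
      rw [Complex.norm_cpow_eq_rpow_re_of_pos ht, sub_re, one_re]
    have c2 : ‖Complex.exp (-((t:ℂ)*u))‖ = Real.exp (-(t*u)) := by
      rw [Complex.norm_exp]
      congr 1
      rw [← ofReal_mul]
      simp
    rw [c1, c2]
    ring
  -- measurability on the product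
  have meas : AEStronglyMeasurable (Function.uncurry K) (μ.prod ν) := by
    rw [hμ, hν, Measure.prod_restrict]
    refine ContinuousOn.aestronglyMeasurable ?_ (measurableSet_Ioi.prod measurableSet_Ioo)
    intro p hp
    have hp1 : (0:ℝ) < p.1 := hp.1
    have hp2 : p.2 ∈ Ioo (0:ℝ) 1 := hp.2
    apply ContinuousAt.continuousWithinAt
    refine ContinuousAt.mul ?_ (ContinuousAt.mul ?_ (ContinuousAt.mul ?_ ?_))
    · exact (continuousAt_ofReal_cpow_const _ _ (Or.inr hp1.ne')).comp continuousAt_fst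
    · exact (Complex.continuous_exp.continuousAt).comp
        (((continuous_ofReal.comp continuous_fst).mul
          (continuous_ofReal.comp continuous_snd)).neg.continuousAt)
    · exact (continuousAt_ofReal_cpow_const _ _ (Or.inr hp2.1.ne')).comp continuousAt_snd
    · refine (continuousAt_cpow_const ?_).comp
        ((continuous_const.sub (continuous_ofReal.comp continuous_snd)).continuousAt)
      rw [Complex.mem_slitPlane_iff]
      left
      simp only [sub_re, one_re, ofReal_re]
      linarith [hp2.2]
  -- integrability of sections in t
  have hsec : ∀ᵐ u ∂ν, Integrable (fun t => K t u) μ := by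
    rw [hν, ae_restrict_iff' measurableSet_Ioo]
    refine Filter.Eventually.of_forall fun u hu => ?_
    have hreal : IntegrableOn (fun x : ℝ => x^(s.re-1) * Real.exp (-u * x)) (Ioi 0) := by
      have := integrableOn_rpow_mul_exp_neg_mul_rpow (p := 1) (s := s.re - 1) (b := u)
        (by linarith) one_pos hu.1
      simpa [Real.rpow_one] using this
    have hmeas : AEStronglyMeasurable (fun t => K t u) μ := by
      rw [hμ]
      refine ContinuousOn.aestronglyMeasurable ?_ measurableSet_Ioi
      intro t ht
      apply ContinuousAt.continuousWithinAt
      refine ContinuousAt.mul ?_ (ContinuousAt.mul ?_ continuousAt_const)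
      · exact continuousAt_ofReal_cpow_const _ _ (Or.inr (ne_of_gt ht))
      · exact (Complex.continuous_exp.continuousAt).comp
          ((continuous_ofReal.mul continuous_const).neg.continuousAt)
    refine Integrable.mono'
      ((hreal.mul_const ‖(u:ℂ)^(a-1) * (1-(u:ℂ))^(b-a-1)‖)) hmeas ?_
    rw [hμ, ae_restrict_iff' measurableSet_Ioi]
    refine Filter.Eventually.of_forall fun t ht => ?_
    rw [hnormK t ht u hu]
    have : -(t*u) = -u*t := by ring
    rw [this]
  -- integrability of the norm-integral in u
  have hnormint : Integrable (fun u => ∫ t, ‖K t u‖ ∂μ) ν := by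
    refine Integrable.congr
      (((beta_Ioo has hba).norm.const_mul (Real.Gamma s.re)) : Integrable _ ν) ?_
    rw [hν, Filter.EventuallyEq, ae_restrict_iff' measurableSet_Ioo]
    refine Filter.Eventually.of_forall fun u hu => ?_
    have h1 : ∫ t, ‖K t u‖ ∂μ
        = (∫ t in Ioi (0:ℝ), t^(s.re-1) * Real.exp (-(u * t)))
          * ‖(u:ℂ)^(a-1) * (1-(u:ℂ))^(b-a-1)‖ := by
      rw [hμ, ← MeasureTheory.integral_mul_const]
      refine setIntegral_congr_fun measurableSet_Ioi fun t ht => ?_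
      rw [hnormK t ht u hu]
      have : -(t*u) = -(u*t) := by ring
      rw [this]
    rw [h1, Real.integral_rpow_mul_exp_neg_mul_Ioi hs hu.1]
    -- now (1/u)^σ * Γσ * ‖u^(a-1)(1-u)^(b-a-1)‖ = Γσ * ‖u^((a-s)-1)(1-u)^((b-a)-1)‖
    have hu0 : (0:ℝ) < u := hu.1
    have e1 : ‖(u:ℂ)^(a-1) * (1-(u:ℂ))^(b-a-1)‖
        = u^(a.re-1) * ‖(1-(u:ℂ))^(b-a-1)‖ := by
      rw [norm_mul, Complex.norm_cpow_eq_rpow_re_of_pos hu0, sub_re, one_re]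
    have e2 : ‖(u:ℂ)^(a-s-1) * (1-(u:ℂ))^(b-a-1)‖
        = u^((a-s).re-1) * ‖(1-(u:ℂ))^(b-a-1)‖ := by
      rw [norm_mul, Complex.norm_cpow_eq_rpow_re_of_pos hu0, sub_re, one_re]
    rw [e1, e2]
    rw [one_div, Real.inv_rpow hu0.le, ← Real.rpow_neg hu0.le]
    have e3 : (a-s).re - 1 = (-s.re) + (a.re - 1) := by simp [sub_re]; ring
    rw [e3, Real.rpow_add hu0]
    ring
  have haveK : Integrable (Function.uncurry K) (μ.prod ν) := by
    refine (integrable_prod_iff' meas).mpr ⟨?_, ?_⟩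
    · exact hsec
    · exact hnormint
  set C := Complex.Gamma a * Complex.Gamma (b-a) / Complex.Gamma b with hCdef
  have hCne : C ≠ 0 := div_ne_zero
    (mul_ne_zero (Gamma_ne_zero_re_pos ha) (Gamma_ne_zero_re_pos hba)) (Gamma_ne_zero_re_pos hb)
  have inner : ∀ t ∈ Ioi (0:ℝ), ∫ u, K t u ∂ν = (t:ℂ)^(s-1) * (C * F11 a b (-(t:ℂ))) := by
    intro t ht
    rw [hν, hK]
    simp only
    rw [MeasureTheory.integral_const_mul, euler_rep ha hab (le_of_lt ht)]
  have h1 : Integrable (fun t => ∫ u, K t u ∂ν) μ := haveK.integral_prod_left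
  have h2 : Integrable (fun t : ℝ => (t:ℂ)^(s-1) * (C * F11 a b (-(t:ℂ)))) μ := by
    refine h1.congr ?_
    rw [hμ, Filter.EventuallyEq, ae_restrict_iff' measurableSet_Ioi]
    exact Filter.Eventually.of_forall fun t ht => inner t ht
  have hint : IntegrableOn (fun t : ℝ => (t:ℂ)^(s-1) * F11 a b (-(t:ℂ))) (Ioi (0:ℝ)) := by
    have h3 := h2.const_mul C⁻¹
    refine h3.congr (Filter.Eventually.of_forall fun t => ?_)
    calc C⁻¹ * ((t:ℂ)^(s-1) * (C * F11 a b (-(t:ℂ))))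
        = (C⁻¹ * C) * ((t:ℂ)^(s-1) * F11 a b (-(t:ℂ))) := by ring
      _ = (t:ℂ)^(s-1) * F11 a b (-(t:ℂ)) := by rw [inv_mul_cancel₀ hCne, one_mul]
  refine ⟨hint, ?_⟩
  have uval : ∀ u ∈ Ioo (0:ℝ) 1, ∫ t, K t u ∂μ
      = Complex.Gamma s * ((u:ℂ)^(a-s-1) * (1-(u:ℂ))^(b-a-1)) := by
    intro u hu
    have hu0 : (0:ℝ) < u := hu.1
    have huc : (u:ℂ) ≠ 0 := ofReal_ne_zero.mpr hu0.ne'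
    have harg : (u:ℂ).arg ≠ Real.pi := by
      rw [arg_ofReal_of_nonneg hu0.le]
      exact Ne.symm Real.pi_ne_zero
    rw [hμ, hK]
    simp only
    have e0 : ∀ t ∈ Ioi (0:ℝ),
        (t:ℂ)^(s-1) * (Complex.exp (-((t:ℂ) * u)) * ((u:ℂ)^(a-1) * (1-(u:ℂ))^(b-a-1)))
        = ((t:ℂ)^(s-1) * Complex.exp (-((u:ℂ) * t))) * ((u:ℂ)^(a-1) * (1-(u:ℂ))^(b-a-1)) := by
      intro t ht
      rw [mul_comm (u:ℂ) (t:ℂ)]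
      ring
    rw [setIntegral_congr_fun measurableSet_Ioi e0, MeasureTheory.integral_mul_const,
      Complex.integral_cpow_mul_exp_neg_mul_Ioi hs hu0]
    rw [one_div, inv_cpow _ _ harg, ← cpow_neg]
    have e4 : (u:ℂ)^(a-s-1) = (u:ℂ)^(-s) * (u:ℂ)^(a-1) := by
      rw [← Complex.cpow_add _ _ huc]
      congr 1
      ring
    rw [e4]
    ring
  have swap := MeasureTheory.integral_integral_swap (f := K) haveK
  have l1 : ∫ t, (∫ u, K t u ∂ν) ∂μ
      = C * ∫ t in Ioi (0:ℝ), (t:ℂ)^(s-1) * F11 a b (-(t:ℂ)) := by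
    rw [← MeasureTheory.integral_const_mul, hμ]
    refine setIntegral_congr_fun measurableSet_Ioi fun t ht => ?_
    rw [inner t ht]
    ring
  have l2 : ∫ u, (∫ t, K t u ∂μ) ∂ν
      = Complex.Gamma s * (Complex.Gamma (a-s) * Complex.Gamma (b-a) / Complex.Gamma (b-s)) := by
    rw [hν]
    rw [setIntegral_congr_fun measurableSet_Ioo uval, MeasureTheory.integral_const_mul,
      beta_Ioo_val has hba, show (a-s)+(b-a) = b-s by ring]
  rw [l1, l2] at swap
  have hΓa := Gamma_ne_zero_re_pos ha
  have hΓb := Gamma_ne_zero_re_pos hb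
  have hΓba := Gamma_ne_zero_re_pos hba
  have hΓbs := Gamma_ne_zero_re_pos hbs
  apply mul_left_cancel₀ hCne
  rw [swap, hCdef]
  field_simp

lemma gamma_ratio (w : ℂ) : w / Complex.Gamma (w+1) = 1 / Complex.Gamma w := by
  rcases eq_or_ne w 0 with h | h
  · simp [h]
  · rw [Complex.Gamma_add_one w h, div_mul_eq_div_div, div_self h]

lemma R_step {a b s : ℂ} (hs0 : s ≠ 0) (hb0 : b ≠ 0) (hb1 : b + 1 ≠ 0) (ha0 : a ≠ 0)
    (hGa : Complex.Gamma a ≠ 0) :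
    Complex.Gamma s * Complex.Gamma (b+1) * Complex.Gamma (a-s)
        / (Complex.Gamma a * Complex.Gamma ((b+1)-s))
      - a/(b*(b+1)) * (Complex.Gamma (s+1) * Complex.Gamma (b+2) * Complex.Gamma ((a+1)-(s+1))
        / (Complex.Gamma (a+1) * Complex.Gamma ((b+2)-(s+1))))
      = Complex.Gamma s * Complex.Gamma b * Complex.Gamma (a-s)
        / (Complex.Gamma a * Complex.Gamma (b-s)) := by
  rw [show (a+1)-(s+1) = a-s by ring, show (b+2)-(s+1) = (b+1)-s by ring,
    show (b:ℂ)+2 = (b+1)+1 by ring,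
    Complex.Gamma_add_one _ hb1, Complex.Gamma_add_one _ hb0,
    Complex.Gamma_add_one _ hs0, Complex.Gamma_add_one _ ha0,
    show (b+1)-s = (b-s)+1 by ring]
  have key := gamma_ratio (b - s)
  have h2 : a/(b*(b+1)) * (s * Complex.Gamma s * ((b+1) * (b * Complex.Gamma b))
        * Complex.Gamma (a-s) / (a * Complex.Gamma a * Complex.Gamma ((b-s)+1)))
      = s * (Complex.Gamma s * Complex.Gamma b * Complex.Gamma (a-s)
        / (Complex.Gamma a * Complex.Gamma ((b-s)+1))) := by
    simp only [div_eq_mul_inv, mul_inv]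
    linear_combination (s * Complex.Gamma s * Complex.Gamma b * Complex.Gamma (a-s)
        * (Complex.Gamma a)⁻¹ * (Complex.Gamma ((b-s)+1))⁻¹ * b * b⁻¹ * (b+1) * (b+1)⁻¹)
        * mul_inv_cancel₀ ha0
      + (s * Complex.Gamma s * Complex.Gamma b * Complex.Gamma (a-s)
        * (Complex.Gamma a)⁻¹ * (Complex.Gamma ((b-s)+1))⁻¹ * (b+1) * (b+1)⁻¹)
        * mul_inv_cancel₀ hb0
      + (s * Complex.Gamma s * Complex.Gamma b * Complex.Gamma (a-s)
        * (Complex.Gamma a)⁻¹ * (Complex.Gamma ((b-s)+1))⁻¹)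
        * mul_inv_cancel₀ hb1
  rw [h2]
  have h3 : Complex.Gamma s * (b * Complex.Gamma b) * Complex.Gamma (a-s)
        / (Complex.Gamma a * Complex.Gamma ((b-s)+1))
      - s * (Complex.Gamma s * Complex.Gamma b * Complex.Gamma (a-s)
        / (Complex.Gamma a * Complex.Gamma ((b-s)+1)))
      = (Complex.Gamma s * Complex.Gamma b * Complex.Gamma (a-s) / Complex.Gamma a)
        * ((b-s) / Complex.Gamma ((b-s)+1)) := by
    ring
  rw [h3, key]
  ring

lemma main_ind (k : ℕ) : ∀ a b s : ℂ, 0 < s.re → s.re < a.re → (∀ n : ℕ, b ≠ -n) →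
    a.re - b.re < k →
    IntegrableOn (fun t : ℝ => (t:ℂ)^(s-1) * F11 a b (-(t:ℂ))) (Ioi (0:ℝ)) ∧
    ∫ t in Ioi (0:ℝ), (t:ℂ)^(s-1) * F11 a b (-(t:ℂ))
      = Complex.Gamma s * Complex.Gamma b * Complex.Gamma (a-s) /
          (Complex.Gamma a * Complex.Gamma (b-s)) := by
  induction k with
  | zero =>
    intro a b s hs hsa hb hk
    simp only [Nat.cast_zero] at hk
    exact mellin_base hs hsa (by linarith)
  | succ k ih =>
    intro a b s hs hsa hb hk
    push_cast at hk
    have hb1 : ∀ n : ℕ, b + 1 ≠ -n := fun n h => hb (n+1) (by push_cast; linear_combination h)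
    have hb2 : ∀ n : ℕ, b + 2 ≠ -n := fun n h => hb (n+2) (by push_cast; linear_combination h)
    have I1 := ih a (b+1) s hs hsa hb1 (by simp only [add_re, one_re]; push_cast; linarith)
    have I2 := ih (a+1) (b+2) (s+1)
      (by simp only [add_re, one_re]; linarith)
      (by simp only [add_re, one_re]; linarith) hb2
      (by simp only [add_re, one_re, re_ofNat]; push_cast; linarith)
    set γ := a / (b * (b + 1)) with hγ
    have pointwise : ∀ t ∈ Ioi (0:ℝ), (t:ℂ)^(s-1) * F11 a b (-(t:ℂ))
        = (t:ℂ)^(s-1) * F11 a (b+1) (-(t:ℂ))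
          + (-γ) * ((t:ℂ)^((s+1)-1) * F11 (a+1) (b+2) (-(t:ℂ))) := by
      intro t ht
      have htc : (t:ℂ) ≠ 0 := ofReal_ne_zero.mpr (ne_of_gt ht)
      rw [F11_rec hb (-(t:ℂ))]
      have e : (t:ℂ)^((s+1)-1) = (t:ℂ)^(s-1) * (t:ℂ) := by
        rw [show (s+1)-1 = (s-1)+1 by ring, cpow_add _ _ htc, cpow_one]
      rw [e, hγ]
      ring
    have hInt : IntegrableOn (fun t : ℝ => (t:ℂ)^(s-1) * F11 a b (-(t:ℂ))) (Ioi (0:ℝ)) := by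
      refine (I1.1.add ((I2.1).const_mul (-γ))).congr ?_
      rw [Filter.EventuallyEq, ae_restrict_iff' measurableSet_Ioi]
      exact Filter.Eventually.of_forall fun t ht => (pointwise t ht).symm
    refine ⟨hInt, ?_⟩
    rw [setIntegral_congr_fun measurableSet_Ioi pointwise,
      MeasureTheory.integral_add I1.1 ((I2.1).const_mul (-γ)),
      MeasureTheory.integral_const_mul, I1.2, I2.2]
    have hs0 : s ≠ 0 := fun h => by rw [h] at hs; simp at hs
    have ha0 : a ≠ 0 := fun h => by rw [h] at hsa; simp at hsa; linarith
    have hb0 : b ≠ 0 := by simpa using hb 0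
    have hb1' : b + 1 ≠ 0 := fun h => hb 1 (by push_cast; linear_combination h)
    have hGa : Complex.Gamma a ≠ 0 := Gamma_ne_zero_re_pos (by linarith)
    have := R_step hs0 hb0 hb1' ha0 hGa
    rw [hγ]
    linear_combination this

/-- Mellin transform of `₁F₁` at negative argument:
`∫₀^∞ t^{s−1} ₁F₁[a;b;−t] dt = Γ(s)Γ(b)Γ(a−s)/(Γ(a)Γ(b−s))`. -/
theorem mellin_1F1 (a b s : ℂ) (hs : 0 < s.re) (hsa : s.re < a.re)
    (hb : ∀ n : ℕ, b ≠ -n) :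
    (∫ t in Set.Ioi (0 : ℝ), (t : ℂ) ^ (s - 1) * F11 a b (-(t : ℂ)))
      = Complex.Gamma s * Complex.Gamma b * Complex.Gamma (a - s) /
          (Complex.Gamma a * Complex.Gamma (b - s)) := by
  obtain ⟨k, hk⟩ := exists_nat_gt (a.re - b.re)
  exact (main_ind k a b s hs hsa hb hk).2
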